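/- In the cochain DG algebra B₆ (free algebra k⟨x₁,x₂⟩, ∂(x₁)=x₂², ∂(x₂)=0), the kernel of ∂ in degree 2 is the 2-dimensional space spanned by x₁x₂+x₂x₁ and x₂², and the image of ∂ from degree 1 is the line k·x₂²; consequently H²(B₆) is one-dimensional spanned by the class of x₁x₂+x₂x₁. -/

import Mathlib

/-- The degree-`i` homogeneous component of the free algebra `k⟨x_1,...,x_n⟩`
with all generators in degree `1`: the span of the words of length `i`. -/
noncomputable def deg (k : Type*) [CommRing k] (n : ℕ) (i : ℕ) :
    Submodule k (FreeAlgebra k (Fin n)) :=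
  Submodule.span k
    {w | ∃ f : Fin i → Fin n, w = (List.ofFn fun j => FreeAlgebra.ι k (f j)).prod}

/-- The first generator `x₁`. -/
noncomputable def X (k : Type*) [CommRing k] : FreeAlgebra k (Fin 2) := FreeAlgebra.ι k 0

/-- The second generator `x₂`. -/
noncomputable def Y (k : Type*) [CommRing k] : FreeAlgebra k (Fin 2) := FreeAlgebra.ι k 1

/-- The degree-2 cocycle `x₁x₂ + x₂x₁` of `B₆`. -/
noncomputable def Q (k : Type*) [CommRing k] : FreeAlgebra k (Fin 2) := X k * Y k + Y k * X k

open FreeAlgebra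

lemma phi_i {k : Type*} [Field k] (i : Fin 2) :
    equivMonoidAlgebraFreeMonoid (ι k i) = MonoidAlgebra.single (FreeMonoid.of i) 1 := by
  simp [equivMonoidAlgebraFreeMonoid, lift_ι_apply]

lemma word_ne {a b c a' b' c' : Fin 2} (h : [a,b,c] ≠ [a',b',c']) :
    FreeMonoid.of a * (FreeMonoid.of b * FreeMonoid.of c) ≠
      FreeMonoid.of a' * (FreeMonoid.of b' * FreeMonoid.of c') := by
  intro he
  exact h (by simpa using congrArg FreeMonoid.toList he)

lemma word_ne2 {a b a' b' : Fin 2} (h : [a,b] ≠ [a',b']) :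
    FreeMonoid.of a * FreeMonoid.of b ≠ FreeMonoid.of a' * FreeMonoid.of b' := by
  intro he
  exact h (by simpa using congrArg FreeMonoid.toList he)

lemma indep3 {k : Type*} [Field k] (l m : k)
    (h : l • (Y k * Y k * X k - X k * (Y k * Y k)) + m • (Y k * Y k * Y k) = 0) :
    l = 0 ∧ m = 0 := by
  rw [X, Y] at h
  have h2 : (equivMonoidAlgebraFreeMonoid (R := k)
      (l • (ι k (1:Fin 2) * ι k (1:Fin 2) * ι k (0:Fin 2) - ι k (0:Fin 2) * (ι k (1:Fin 2) * ι k (1:Fin 2))) + m • (ι k (1:Fin 2) * ι k (1:Fin 2) * ι k (1:Fin 2)))) = 0 := by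
    rw [h]; simp
  rw [map_add, map_smul, map_smul, map_sub] at h2
  simp only [map_mul, phi_i, MonoidAlgebra.single_mul_single, one_mul, mul_one, mul_assoc,
    smul_sub, MonoidAlgebra.smul_single', smul_eq_mul] at h2
  set w1 : FreeMonoid (Fin 2) := FreeMonoid.of 1 * (FreeMonoid.of 1 * FreeMonoid.of 0) with hw1
  set w2 : FreeMonoid (Fin 2) := FreeMonoid.of 0 * (FreeMonoid.of 1 * FreeMonoid.of 1) with hw2
  set w3 : FreeMonoid (Fin 2) := FreeMonoid.of 1 * (FreeMonoid.of 1 * FreeMonoid.of 1) with hw3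
  have h2' : Finsupp.single w1 l - Finsupp.single w2 l + Finsupp.single w3 m
      = (0 : FreeMonoid (Fin 2) →₀ k) := congrArg MonoidAlgebra.coeff h2
  have e12 : w1 ≠ w2 := word_ne (by decide)
  have e13 : w1 ≠ w3 := word_ne (by decide)
  have e23 : w2 ≠ w3 := word_ne (by decide)
  constructor
  · have h3 := DFunLike.congr_fun h2' w1
    simpa [Finsupp.single_apply, e12.symm, e13.symm, Ne.symm e12, Ne.symm e13] using h3
  · have h3 := DFunLike.congr_fun h2' w3
    simpa [Finsupp.single_apply, e13, e23] using h3

lemma indep2 {k : Type*} [Field k] (c : k) : Q k ≠ c • (Y k * Y k) := by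
  rw [Q, X, Y]
  intro h
  have h2 : (equivMonoidAlgebraFreeMonoid (R := k) (ι k (0:Fin 2) * ι k (1:Fin 2) + ι k (1:Fin 2) * ι k (0:Fin 2)))
      = equivMonoidAlgebraFreeMonoid (R := k) (c • (ι k (1:Fin 2) * ι k (1:Fin 2))) := by rw [h]
  rw [map_add, map_smul] at h2
  simp only [map_mul, phi_i, MonoidAlgebra.single_mul_single, one_mul, mul_one,
    MonoidAlgebra.smul_single', smul_eq_mul] at h2
  set w1 : FreeMonoid (Fin 2) := FreeMonoid.of 0 * FreeMonoid.of 1 with hw1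
  set w2 : FreeMonoid (Fin 2) := FreeMonoid.of 1 * FreeMonoid.of 0 with hw2
  set w3 : FreeMonoid (Fin 2) := FreeMonoid.of 1 * FreeMonoid.of 1 with hw3
  have h2' : Finsupp.single w1 (1:k) + Finsupp.single w2 1 = Finsupp.single w3 c := congrArg MonoidAlgebra.coeff h2
  have e12 : w1 ≠ w2 := word_ne2 (by decide)
  have e13 : w1 ≠ w3 := word_ne2 (by decide)
  have h3 := DFunLike.congr_fun h2' w1
  simp [Finsupp.single_apply, Ne.symm e12, Ne.symm e13, e12, e13] at h3

lemma fin2cases (i : Fin 2) : i = 0 ∨ i = 1 := by omega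

lemma memX {k : Type*} [Field k] (i : Fin 2) : ι k i ∈ deg k 2 1 := by
  apply Submodule.subset_span
  exact ⟨fun _ => i, by simp⟩

lemma memXX {k : Type*} [Field k] (i j : Fin 2) : ι k i * ι k j ∈ deg k 2 2 := by
  apply Submodule.subset_span
  refine ⟨![i, j], ?_⟩
  simp [List.ofFn_succ, mul_assoc]

lemma dec1 {k : Type*} [Field k] {a : FreeAlgebra k (Fin 2)} (ha : a ∈ deg k 2 1) :
    ∃ c1 c2 : k, a = c1 • X k + c2 • Y k := by
  induction ha using Submodule.span_induction with
  | mem w hw =>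
    obtain ⟨f, rfl⟩ := hw
    rcases fin2cases (f 0) with h | h
    · exact ⟨1, 0, by simp [h, X]⟩
    · exact ⟨0, 1, by simp [h, Y]⟩
  | zero => exact ⟨0, 0, by simp⟩
  | add x y _ _ hx hy =>
    obtain ⟨c1, c2, rfl⟩ := hx
    obtain ⟨e1, e2, rfl⟩ := hy
    exact ⟨c1 + e1, c2 + e2, by module⟩
  | smul r x _ hx =>
    obtain ⟨c1, c2, rfl⟩ := hx
    exact ⟨r * c1, r * c2, by module⟩

lemma dec2 {k : Type*} [Field k] {a : FreeAlgebra k (Fin 2)} (ha : a ∈ deg k 2 2) :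
    ∃ l1 l2 l3 l4 : k,
      a = l1 • (X k * X k) + l2 • (X k * Y k) + l3 • (Y k * X k) + l4 • (Y k * Y k) := by
  induction ha using Submodule.span_induction with
  | mem w hw =>
    obtain ⟨f, rfl⟩ := hw
    have hw2 : (List.ofFn fun j : Fin 2 => ι k (f j)).prod = ι k (f 0) * ι k (f 1) := by
      simp [List.ofFn_succ, mul_assoc]
    rw [hw2]
    rcases fin2cases (f 0) with h0 | h0 <;> rcases fin2cases (f 1) with h1 | h1
    · exact ⟨1, 0, 0, 0, by simp [h0, h1, X, Y]⟩
    · exact ⟨0, 1, 0, 0, by simp [h0, h1, X, Y]⟩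
    · exact ⟨0, 0, 1, 0, by simp [h0, h1, X, Y]⟩
    · exact ⟨0, 0, 0, 1, by simp [h0, h1, X, Y]⟩
  | zero => exact ⟨0, 0, 0, 0, by simp⟩
  | add x y _ _ hx hy =>
    obtain ⟨l1, l2, l3, l4, rfl⟩ := hx
    obtain ⟨m1, m2, m3, m4, rfl⟩ := hy
    exact ⟨l1 + m1, l2 + m2, l3 + m3, l4 + m4, by module⟩
  | smul r x _ hx =>
    obtain ⟨l1, l2, l3, l4, rfl⟩ := hx
    exact ⟨r * l1, r * l2, r * l3, r * l4, by module⟩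

/-- in `B₆` (`∂(x₁) = x₂²`, `∂(x₂) = 0`), the kernel of `∂`
in degree 2 is spanned by `x₁x₂+x₂x₁` and `x₂²`, the image of `∂` from
degree 1 is the line `k·x₂²`, and consequently `H²(B₆)` is one-dimensional,
spanned by the class of `x₁x₂+x₂x₁`. -/
theorem stmt12 {k : Type*} [Field k] [CharZero k]
    (d : FreeAlgebra k (Fin 2) →ₗ[k] FreeAlgebra k (Fin 2))
    (hL : ∀ (p : ℕ) (a b : FreeAlgebra k (Fin 2)), a ∈ deg k 2 p →
      d (a * b) = d a * b + ((-1 : k) ^ p) • (a * d b))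
    (h1 : d (X k) = Y k * Y k)
    (h2 : d (Y k) = 0)
    (hdd : ∀ x, d (d x) = 0) :
    (∀ a ∈ deg k 2 2, (d a = 0 ↔ ∃ c e : k, a = c • Q k + e • (Y k * Y k))) ∧
    (∀ a ∈ deg k 2 1, ∃ c : k, d a = c • (Y k * Y k)) ∧
    (∀ c : k, ∃ a ∈ deg k 2 1, d a = c • (Y k * Y k)) ∧
    (¬ ∃ b ∈ deg k 2 1, d b = Q k) ∧
    (∀ a ∈ deg k 2 2, d a = 0 →
      ∃ c : k, ∃ b ∈ deg k 2 1, a = c • Q k + d b) := by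
  have memX1 : X k ∈ deg k 2 1 := memX 0
  have memY1 : Y k ∈ deg k 2 1 := memX 1
  have dXX : d (X k * X k) = Y k * Y k * X k - X k * (Y k * Y k) := by
    rw [hL 1 (X k) (X k) memX1, h1]; module
  have dXY : d (X k * Y k) = Y k * Y k * Y k := by
    rw [hL 1 (X k) (Y k) memX1, h1, h2, mul_zero]; module
  have dYX : d (Y k * X k) = -(Y k * (Y k * Y k)) := by
    rw [hL 1 (Y k) (X k) memY1, h1, h2, zero_mul]; module
  have dYY : d (Y k * Y k) = 0 := by
    rw [hL 1 (Y k) (Y k) memY1, h2, zero_mul, mul_zero]; module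
  have dQ : d (Q k) = 0 := by
    rw [Q, map_add, dXY, dYX, mul_assoc]; module
  -- the differential on a general degree-2 element
  have key : ∀ l1 l2 l3 l4 : k,
      d (l1 • (X k * X k) + l2 • (X k * Y k) + l3 • (Y k * X k) + l4 • (Y k * Y k)) =
        l1 • (Y k * Y k * X k - X k * (Y k * Y k)) + (l2 - l3) • (Y k * Y k * Y k) := by
    intro l1 l2 l3 l4
    rw [map_add, map_add, map_add, map_smul, map_smul, map_smul, map_smul,
      dXX, dXY, dYX, dYY, mul_assoc (Y k) (Y k) (Y k)]
    module
  have stmt1 : ∀ a ∈ deg k 2 2, (d a = 0 ↔ ∃ c e : k, a = c • Q k + e • (Y k * Y k)) := by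
    intro a ha
    constructor
    · intro hda
      obtain ⟨l1, l2, l3, l4, rfl⟩ := dec2 ha
      rw [key] at hda
      obtain ⟨hl1, hl23⟩ := indep3 _ _ hda
      refine ⟨l2, l4, ?_⟩
      have hl3 : l3 = l2 := (sub_eq_zero.mp hl23).symm
      rw [hl1, hl3, Q]
      module
    · rintro ⟨c, e, rfl⟩
      rw [map_add, map_smul, map_smul, dQ, dYY]
      simp
  have stmt2 : ∀ a ∈ deg k 2 1, ∃ c : k, d a = c • (Y k * Y k) := by
    intro a ha
    obtain ⟨c1, c2, rfl⟩ := dec1 ha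
    exact ⟨c1, by rw [map_add, map_smul, map_smul, h1, h2]; module⟩
  refine ⟨stmt1, stmt2, ?_, ?_, ?_⟩
  · intro c
    exact ⟨c • X k, Submodule.smul_mem _ c memX1, by rw [map_smul, h1]⟩
  · rintro ⟨b, hb, hdb⟩
    obtain ⟨c, hc⟩ := stmt2 b hb
    exact indep2 c (hdb ▸ hc)
  · intro a ha hda
    obtain ⟨c, e, hce⟩ := (stmt1 a ha).mp hda
    refine ⟨c, e • X k, Submodule.smul_mem _ e memX1, ?_⟩
    rw [map_smul, h1, hce]
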